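/- Let λ₂, λ₃ be real with 0 < λ₂ < λ₃ and let τ be real with 0 < τ² < 3λ₂. Set ρ₂ = (2(λ₃−λ₂)(2λ₂+λ₃))^{−1/2} and ρ₃ = (2(λ₃−λ₂)(λ₂+2λ₃))^{−1/2}. Then 0 < ρ₂√(3λ₂−τ²)/(ρ₃√(3λ₃−τ²)) ≤ √(λ₂(λ₂+2λ₃)/(λ₃(2λ₂+λ₃))) < 1. -/
import Mathlib


/-- For 0 < λ₂ < λ₃ and 0 < τ² < 3λ₂, with ρ₂ = (2(λ₃−λ₂)(2λ₂+λ₃))^{−1/2} and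
ρ₃ = (2(λ₃−λ₂)(λ₂+2λ₃))^{−1/2}:
0 < ρ₂√(3λ₂−τ²)/(ρ₃√(3λ₃−τ²)) ≤ √(λ₂(λ₂+2λ₃)/(λ₃(2λ₂+λ₃))) < 1. -/
theorem ratio_bound_neg_polarized (l₂ l₃ τ : ℝ) (h2 : 0 < l₂) (h23 : l₂ < l₃)
    (hτ0 : 0 < τ ^ 2) (hτ : τ ^ 2 < 3 * l₂) :
    0 < (Real.sqrt (2 * (l₃ - l₂) * (2 * l₂ + l₃)))⁻¹ * Real.sqrt (3 * l₂ - τ ^ 2) /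
        ((Real.sqrt (2 * (l₃ - l₂) * (l₂ + 2 * l₃)))⁻¹ * Real.sqrt (3 * l₃ - τ ^ 2)) ∧
    (Real.sqrt (2 * (l₃ - l₂) * (2 * l₂ + l₃)))⁻¹ * Real.sqrt (3 * l₂ - τ ^ 2) /
        ((Real.sqrt (2 * (l₃ - l₂) * (l₂ + 2 * l₃)))⁻¹ * Real.sqrt (3 * l₃ - τ ^ 2)) ≤
      Real.sqrt (l₂ * (l₂ + 2 * l₃) / (l₃ * (2 * l₂ + l₃))) ∧
    Real.sqrt (l₂ * (l₂ + 2 * l₃) / (l₃ * (2 * l₂ + l₃))) < 1 := by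
  have ha : (0:ℝ) < 2 * (l₃ - l₂) * (2 * l₂ + l₃) := by nlinarith
  have hc : (0:ℝ) < 2 * (l₃ - l₂) * (l₂ + 2 * l₃) := by nlinarith
  have hb : (0:ℝ) < 3 * l₂ - τ ^ 2 := by linarith
  have hd : (0:ℝ) < 3 * l₃ - τ ^ 2 := by nlinarith
  have sa : 0 < Real.sqrt (2 * (l₃ - l₂) * (2 * l₂ + l₃)) := Real.sqrt_pos.mpr ha
  have sc : 0 < Real.sqrt (2 * (l₃ - l₂) * (l₂ + 2 * l₃)) := Real.sqrt_pos.mpr hc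
  have sb : 0 < Real.sqrt (3 * l₂ - τ ^ 2) := Real.sqrt_pos.mpr hb
  have sd : 0 < Real.sqrt (3 * l₃ - τ ^ 2) := Real.sqrt_pos.mpr hd
  have key : (Real.sqrt (2 * (l₃ - l₂) * (2 * l₂ + l₃)))⁻¹ * Real.sqrt (3 * l₂ - τ ^ 2) /
        ((Real.sqrt (2 * (l₃ - l₂) * (l₂ + 2 * l₃)))⁻¹ * Real.sqrt (3 * l₃ - τ ^ 2)) =
      Real.sqrt ((3 * l₂ - τ ^ 2) / (2 * (l₃ - l₂) * (2 * l₂ + l₃)) *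
        ((2 * (l₃ - l₂) * (l₂ + 2 * l₃)) / (3 * l₃ - τ ^ 2))) := by
    rw [Real.sqrt_mul (div_nonneg hb.le ha.le), Real.sqrt_div hb.le, Real.sqrt_div hc.le]
    field_simp
  rw [key]
  have hP : 0 < (3 * l₂ - τ ^ 2) / (2 * (l₃ - l₂) * (2 * l₂ + l₃)) *
      ((2 * (l₃ - l₂) * (l₂ + 2 * l₃)) / (3 * l₃ - τ ^ 2)) :=
    mul_pos (div_pos hb ha) (div_pos hc hd)
  refine ⟨Real.sqrt_pos.mpr hP, ?_, ?_⟩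
  · apply Real.sqrt_le_sqrt
    rw [div_mul_div_comm, div_le_div_iff₀ (mul_pos ha hd)
      (mul_pos (by linarith : (0:ℝ) < l₃) (by linarith : (0:ℝ) < 2 * l₂ + l₃))]
    nlinarith [mul_pos (mul_pos (mul_pos (mul_pos hτ0 (sub_pos.mpr h23))
        (sub_pos.mpr h23)) (by nlinarith : (0:ℝ) < l₂ + 2 * l₃))
        (by nlinarith : (0:ℝ) < 2 * l₂ + l₃)]
  · rw [show (1:ℝ) = Real.sqrt 1 by simp]
    apply Real.sqrt_lt_sqrt (le_of_lt (div_pos (mul_pos h2 (by linarith)) (mul_pos (by linarith) (by linarith))))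
    rw [div_lt_one (mul_pos (by linarith) (by linarith))]
    nlinarith
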